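/- Let (A,B) be a bimatrix game with unique completely mixed Nash equilibrium E = (E_A, E_B) satisfying the minmax property Ā(q) ≥ Ā(E_B) and B̄(p) ≥ B̄(E_A) for all (p,q) ∈ Σ_A × Σ_B. Then asymptotically the average payoff along any fictitious play orbit is at least the Nash equilibrium payoff: liminf_{T→∞} (1/T)∫_0^T x(t)·A·y(t)dt ≥ π_A(E) and liminf_{T→∞} (1/T)∫_0^T x(t)·B·y(t)dt ≥ π_B(E). -/

import Mathlib

open Filter MeasureTheory
open scoped BigOperators Topology

/-- Expected payoff `p A q`. -/
def pay {n : ℕ} (A : Matrix (Fin (n + 1)) (Fin (n + 1)) ℝ)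
    (p q : Fin (n + 1) → ℝ) : ℝ :=
  ∑ i, ∑ j, p i * A i j * q j

/-- `(p,q)` is a Nash equilibrium of the bimatrix game `(A,B)`. -/
def IsNash {n : ℕ} (A B : Matrix (Fin (n + 1)) (Fin (n + 1)) ℝ)
    (p q : Fin (n + 1) → ℝ) : Prop :=
  p ∈ stdSimplex ℝ (Fin (n + 1)) ∧ q ∈ stdSimplex ℝ (Fin (n + 1)) ∧
  (∀ p' ∈ stdSimplex ℝ (Fin (n + 1)), pay A p' q ≤ pay A p q) ∧
  (∀ q' ∈ stdSimplex ℝ (Fin (n + 1)), pay B p q' ≤ pay B p q)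

/-- Maximal entry of `A q`. -/
noncomputable def Abar {n : ℕ} (A : Matrix (Fin (n + 1)) (Fin (n + 1)) ℝ)
    (q : Fin (n + 1) → ℝ) : ℝ :=
  Finset.univ.sup' Finset.univ_nonempty (fun i => ∑ j, A i j * q j)

/-- Maximal entry of `p B`. -/
noncomputable def Bbar {n : ℕ} (B : Matrix (Fin (n + 1)) (Fin (n + 1)) ℝ)
    (p : Fin (n + 1) → ℝ) : ℝ :=
  Finset.univ.sup' Finset.univ_nonempty (fun j => ∑ i, p i * B i j)


lemma bdd_intervalIntegrable {h : ℝ → ℝ} (hm : Measurable h) {M : ℝ}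
    (hM : ∀ t, |h t| ≤ M) (a b : ℝ) : IntervalIntegrable h volume a b := by
  apply IntervalIntegrable.mono_fun' (g := fun _ => M) intervalIntegrable_const
    hm.aestronglyMeasurable (ae_of_all _ fun t => by simpa using hM t)

lemma bdd_locallyIntegrable {h : ℝ → ℝ} (hm : Measurable h) {M : ℝ}
    (hM : ∀ t, |h t| ≤ M) : LocallyIntegrable h volume := by
  rw [locallyIntegrable_iff]
  intro k hk
  exact Integrable.mono' (integrableOn_const hk.measure_lt_top.ne)
    hm.aestronglyMeasurable (ae_of_all _ fun t => by simpa using hM t)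

lemma ae_onesided {f : ℝ → ℝ} (hf : LocallyIntegrable f volume) :
    ∀ᵐ r ∂(volume : Measure ℝ), ∀ (u : ℕ → ℝ), Tendsto u atTop (𝓝[>] 0) →
      Tendsto (fun k => (1/(u k)) * ∫ s in Set.Ioc (r - u k) r, f s) atTop (𝓝 (f r)) := by
  filter_upwards [IsUnifLocDoublingMeasure.ae_tendsto_average_norm_sub
    (volume : Measure ℝ) hf 1] with r hr u hu
  have h0 : Tendsto u atTop (𝓝 0) := tendsto_nhds_of_tendsto_nhdsWithin hu
  have hpos : ∀ᶠ k in atTop, 0 < u k := eventually_mem_of_tendsto_nhdsWithin hu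
  have h2 : Tendsto (fun k => u k / 2) atTop (𝓝[>] 0) := by
    rw [tendsto_nhdsWithin_iff]
    refine ⟨by simpa using h0.div_const 2, hpos.mono fun k hk => Set.mem_Ioi.2 (half_pos hk)⟩
  have hmem : ∀ᶠ k in atTop, r ∈ Metric.closedBall (r - u k / 2) (1 * (u k / 2)) := by
    filter_upwards [hpos] with k hk
    simp only [Metric.mem_closedBall, one_mul, Real.dist_eq]
    rw [show r - (r - u k / 2) = u k / 2 by ring, abs_of_nonneg (by linarith)]
  have hr' := hr (fun k => r - u k / 2) (fun k => u k / 2) h2 hmem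
  rw [← tendsto_sub_nhds_zero_iff]
  apply squeeze_zero_norm' _ hr'
  filter_upwards [hpos] with k hk
  set h := u k with hh
  have hball : Metric.closedBall (r - h / 2) (h / 2) = Set.Icc (r - h) r := by
    rw [Real.closedBall_eq_Icc]; congr 1 <;> ring
  have hvol : (volume (Set.Icc (r - h) r)).toReal = h := by
    rw [Real.volume_Icc, ENNReal.toReal_ofReal (by linarith)]; ring
  have hfint : IntegrableOn f (Set.Icc (r - h) r) volume :=
    hf.integrableOn_isCompact isCompact_Icc
  have hconst : IntegrableOn (fun _ => f r) (Set.Icc (r - h) r) volume :=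
    integrableOn_const (by rw [Real.volume_Icc]; exact ENNReal.ofReal_ne_top)
  -- rewrite the average as (1/h) * ∫ over Icc
  have havg : (⨍ y in Metric.closedBall (r - h/2) (h/2), ‖f y - f r‖ ∂volume)
      = (1/h) * ∫ s in Set.Icc (r - h) r, |f s - f r| := by
    rw [hball, setAverage_eq, measureReal_def, hvol]
    simp [one_div, Real.norm_eq_abs, smul_eq_mul]
  -- the main bound
  have hIoc : (∫ s in Set.Ioc (r - h) r, f s) = ∫ s in Set.Icc (r - h) r, f s :=
    (integral_Icc_eq_integral_Ioc).symm
  have hsub : (∫ s in Set.Icc (r - h) r, f s) - h * f r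
      = ∫ s in Set.Icc (r - h) r, (f s - f r) := by
    rw [integral_sub hfint hconst, setIntegral_const, measureReal_def, hvol, smul_eq_mul]
  have hb : ‖(1/h) * (∫ s in Set.Ioc (r - h) r, f s) - f r‖
      ≤ ⨍ y in Metric.closedBall (r - h/2) (h/2), ‖f y - f r‖ ∂volume := by
    rw [havg]
    have : (1/h) * (∫ s in Set.Ioc (r - h) r, f s) - f r
        = (1/h) * ((∫ s in Set.Icc (r - h) r, f s) - h * f r) := by
      rw [hIoc]; field_simp
    rw [show (1/h) * (∫ s in Set.Ioc (r - h) r, f s) - f r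
        = (1/h) * ((∫ s in Set.Icc (r - h) r, f s) - h * f r) from this, hsub]
    rw [Real.norm_eq_abs, abs_mul, abs_of_nonneg (by positivity : (0:ℝ) ≤ 1/h)]
    gcongr
    simpa [Real.norm_eq_abs] using
      norm_integral_le_integral_norm (μ := volume.restrict (Set.Icc (r - h) r))
        (f := fun s => f s - f r)
  exact hb

lemma ftc_ineq {n : ℕ} (f : ℝ → Fin (n+1) → ℝ) (x : ℝ → Fin (n+1) → ℝ) (M : ℝ)
    (hfm : ∀ i, Measurable (fun t => f t i)) (hfb : ∀ t i, |f t i| ≤ M)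
    (hfl : ∀ i, LocallyIntegrable (fun t => f t i) volume)
    (hxm : Measurable x) (hx : ∀ t, x t ∈ stdSimplex ℝ (Fin (n+1)))
    (hmax : ∀ t, 1 ≤ t → ∀ i, (∫ s in (0:ℝ)..t, f s i) ≤ ∑ j, x t j * (∫ s in (0:ℝ)..t, f s j))
    (T : ℝ) (hT : 1 < T) :
    (Finset.univ.sup' Finset.univ_nonempty fun i => ∫ s in (0:ℝ)..T, f s i)
      - (Finset.univ.sup' Finset.univ_nonempty fun i => ∫ s in (0:ℝ)..1, f s i)
      ≤ ∫ r in (1:ℝ)..T, ∑ i, x r i * f r i := by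
  have hM0 : 0 ≤ M := (abs_nonneg _).trans (hfb 0 0)
  have hfi : ∀ (i) (a b : ℝ), IntervalIntegrable (fun t => f t i) volume a b :=
    fun i a b => bdd_intervalIntegrable (hfm i) (fun t => hfb t i) a b
  set g : Fin (n+1) → ℝ → ℝ := fun i t => ∫ s in (0:ℝ)..t, f s i with hgdef
  have hgc : ∀ i, Continuous (g i) :=
    fun i => intervalIntegral.continuous_primitive (fun a b => hfi i a b) 0
  have hgsub : ∀ (i) (a b : ℝ), g i b - g i a = ∫ s in a..b, f s i :=
    fun i a b => intervalIntegral.integral_interval_sub_left (hfi i 0 b) (hfi i 0 a)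
  have hgbd : ∀ (i) (a b : ℝ), |g i b - g i a| ≤ M * |b - a| := by
    intro i a b
    rw [hgsub]
    simpa [Real.norm_eq_abs] using intervalIntegral.norm_integral_le_of_norm_le_const
      (C := M) (f := fun t => f t i) (a := a) (b := b)
      (fun s _ => by simpa [Real.norm_eq_abs] using hfb s i)
  set W : ℝ → ℝ := fun t => Finset.univ.sup' Finset.univ_nonempty (fun i => g i t) with hWdef
  have hWc : Continuous W :=
    Continuous.finset_sup'_apply Finset.univ_nonempty (fun i _ => hgc i)
  have hWint : ∀ a b : ℝ, IntervalIntegrable W volume a b := fun a b => hWc.intervalIntegrable a b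
  have hgleW : ∀ i t, g i t ≤ W t := fun i t => Finset.le_sup' (fun i => g i t) (Finset.mem_univ i)
  have hWlip : ∀ s t : ℝ, |W t - W s| ≤ M * |t - s| := by
    have key : ∀ s t : ℝ, W t - W s ≤ M * |t - s| := by
      intro s t
      obtain ⟨i, -, hi⟩ := Finset.exists_mem_eq_sup' Finset.univ_nonempty (fun i => g i t)
      rw [hWdef]
      simp only at hi ⊢
      rw [hi]
      have := (abs_le.1 (hgbd i s t)).2
      have h2 := hgleW i s
      linarith
    intro s t
    rw [abs_sub_le_iff]
    refine ⟨key s t, ?_⟩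
    have := key t s
    rwa [abs_sub_comm] at this
  have hxnn : ∀ t i, 0 ≤ x t i := fun t => (hx t).1
  have hxsum : ∀ t, ∑ i, x t i = 1 := fun t => (hx t).2
  have hcomb : ∀ (t : ℝ) (v : Fin (n+1) → ℝ),
      (∑ i, x t i * v i) ≤ Finset.univ.sup' Finset.univ_nonempty v := by
    intro t v
    calc ∑ i, x t i * v i
        ≤ ∑ i, x t i * Finset.univ.sup' Finset.univ_nonempty v := by
          refine Finset.sum_le_sum fun i _ => ?_
          exact mul_le_mul_of_nonneg_left (Finset.le_sup' v (Finset.mem_univ i)) (hxnn t i)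
      _ = Finset.univ.sup' Finset.univ_nonempty v := by rw [← Finset.sum_mul, hxsum, one_mul]
  have hK1 : ∀ t : ℝ, 1 ≤ t → (∑ i, x t i * g i t) = W t := by
    intro t ht
    refine le_antisymm (hcomb t _) (Finset.sup'_le _ _ fun i _ => hmax t ht i)
  set pay : ℝ → ℝ := fun r => ∑ i, x r i * f r i with hpaydef
  have hpaym : Measurable pay :=
    Finset.measurable_sum _ fun i _ => ((measurable_pi_apply i).comp hxm).mul (hfm i)
  have hpaybd : ∀ r, |pay r| ≤ M := by
    intro r
    calc |∑ i, x r i * f r i| ≤ ∑ i, |x r i * f r i| := Finset.abs_sum_le_sum_abs _ _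
      _ ≤ ∑ i, x r i * M := by
          refine Finset.sum_le_sum fun i _ => ?_
          rw [abs_mul, abs_of_nonneg (hxnn r i)]
          exact mul_le_mul_of_nonneg_left (hfb r i) (hxnn r i)
      _ = M := by rw [← Finset.sum_mul, hxsum, one_mul]
  have hpayint : ∀ a b : ℝ, IntervalIntegrable pay volume a b :=
    fun a b => bdd_intervalIntegrable hpaym hpaybd a b
  -- Ψ
  set Ψ : ℝ → ℝ → ℝ := fun h r => ∑ i, x r i * (g i r - g i (r - h)) with hΨdef
  have hΨm : ∀ h, Measurable (Ψ h) := by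
    intro h
    refine Finset.measurable_sum _ fun i _ => ((measurable_pi_apply i).comp hxm).mul ?_
    exact ((hgc i).measurable).sub (((hgc i).measurable).comp (measurable_id.sub measurable_const))
  have hΨbd : ∀ h r, 0 ≤ h → |Ψ h r| ≤ M * h := by
    intro h r hh
    calc |∑ i, x r i * (g i r - g i (r - h))| ≤ ∑ i, |x r i * (g i r - g i (r - h))| :=
        Finset.abs_sum_le_sum_abs _ _
      _ ≤ ∑ i, x r i * (M * h) := by
          refine Finset.sum_le_sum fun i _ => ?_
          rw [abs_mul, abs_of_nonneg (hxnn r i)]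
          refine mul_le_mul_of_nonneg_left ?_ (hxnn r i)
          have := hgbd i (r - h) r
          rwa [show r - (r - h) = h by ring, abs_of_nonneg hh] at this
      _ = M * h := by rw [← Finset.sum_mul, hxsum, one_mul]
  have hΨint : ∀ h, 0 ≤ h → ∀ a b : ℝ, IntervalIntegrable (Ψ h) volume a b :=
    fun h hh a b => bdd_intervalIntegrable (hΨm h) (fun r => hΨbd h r hh) a b
  -- step 1 : sandwich
  have step1 : ∀ a b : ℝ, 1 ≤ a → a ≤ b → W b - W a ≤ Ψ (b - a) b := by
    intro a b ha hab
    have h1 : ∑ i, x b i * g i a ≤ W a := hcomb b (fun i => g i a)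
    have h2 : (∑ i, x b i * g i b) = W b := hK1 b (ha.trans hab)
    have h3 : Ψ (b - a) b = (∑ i, x b i * g i b) - ∑ i, x b i * g i a := by
      rw [hΨdef]
      simp only [show b - (b - a) = a by ring]
      rw [← Finset.sum_sub_distrib]
      exact Finset.sum_congr rfl fun i _ => by ring
    rw [h3, h2]
    linarith
  -- step 2 : integrated inequality
  have step2 : ∀ h : ℝ, 0 < h → h ≤ T - 1 →
      (∫ r in (T - h)..T, W r) - (∫ r in (1:ℝ)..(1+h), W r) ≤ ∫ r in (1+h)..T, Ψ h r := by
    intro h hh hhT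
    have h1T : (1:ℝ) + h ≤ T := by linarith
    have hWsh : IntervalIntegrable (fun r => W (r - h)) volume (1+h) T :=
      ((hWc.comp (continuous_id.sub continuous_const)).intervalIntegrable _ _)
    have mono : ∫ r in (1+h)..T, (W r - W (r - h)) ≤ ∫ r in (1+h)..T, Ψ h r := by
      refine intervalIntegral.integral_mono_on h1T ((hWint _ _).sub hWsh) (hΨint h hh.le _ _) ?_
      intro r hr
      have h1r : 1 ≤ r - h := by
        have := hr.1; linarith
      have := step1 (r - h) r h1r (by linarith)
      rwa [show r - (r - h) = h by ring] at this
    have e0 : ∫ r in (1+h)..T, (W r - W (r - h))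
        = (∫ r in (1+h)..T, W r) - ∫ r in (1+h)..T, W (r - h) :=
      intervalIntegral.integral_sub (hWint _ _) hWsh
    have e1 : (∫ r in (1+h)..T, W (r - h)) = ∫ r in (1:ℝ)..(T - h), W r := by
      rw [intervalIntegral.integral_comp_sub_right (fun r => W r) h]
      norm_num
    have e2 : (∫ r in (1+h)..T, W r) = (∫ r in (1+h)..(T-h), W r) + ∫ r in (T-h)..T, W r :=
      (intervalIntegral.integral_add_adjacent_intervals (hWint _ _) (hWint _ _)).symm
    have e3 : (∫ r in (1:ℝ)..(T-h), W r) = (∫ r in (1:ℝ)..(1+h), W r) + ∫ r in (1+h)..(T-h), W r :=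
      (intervalIntegral.integral_add_adjacent_intervals (hWint _ _) (hWint _ _)).symm
    rw [e0, e1] at mono
    linarith
  -- the sequence of step sizes
  set u : ℕ → ℝ := fun k => (T - 1) / (k + 1) with hudef
  have hu_pos : ∀ k, 0 < u k := fun k => div_pos (by linarith) (by positivity)
  have hu_le : ∀ k, u k ≤ T - 1 := by
    intro k
    rw [hudef]
    apply div_le_self (by linarith)
    have : (0:ℝ) ≤ (k:ℝ) := Nat.cast_nonneg k
    linarith
  have hu0 : Tendsto u atTop (𝓝 0) := by
    have h1 : Tendsto (fun n : ℕ => 1 / ((n:ℝ) + 1)) atTop (𝓝 0) :=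
      tendsto_one_div_add_atTop_nhds_zero_nat
    have h2 := h1.const_mul (T - 1)
    rw [mul_zero] at h2
    refine h2.congr fun k => ?_
    rw [hudef]
    ring
  have huW : Tendsto u atTop (𝓝[>] 0) :=
    tendsto_nhdsWithin_iff.2 ⟨hu0, Eventually.of_forall (fun k => Set.mem_Ioi.2 (hu_pos k))⟩
  -- left endpoint averages
  have avg_left : Tendsto (fun k => (1/u k) * ∫ r in (T - u k)..T, W r) atTop (𝓝 (W T)) := by
    rw [← tendsto_sub_nhds_zero_iff]
    refine squeeze_zero_norm (fun k => ?_) (by simpa using hu0.const_mul M)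
    set h := u k with hh
    have hh0 : 0 < h := hu_pos k
    have e : (∫ r in (T - h)..T, W r) - h * W T = ∫ r in (T - h)..T, (W r - W T) := by
      rw [intervalIntegral.integral_sub (hWint _ _) intervalIntegrable_const,
        intervalIntegral.integral_const, smul_eq_mul]
      ring_nf
    have nb : ‖∫ r in (T - h)..T, (W r - W T)‖ ≤ (M * h) * |T - (T - h)| := by
      refine intervalIntegral.norm_integral_le_of_norm_le_const fun r hr => ?_
      rw [Set.uIoc_of_le (by linarith)] at hr
      rw [Real.norm_eq_abs]
      calc |W r - W T| ≤ M * |r - T| := hWlip T r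
        _ ≤ M * h := by
            refine mul_le_mul_of_nonneg_left ?_ hM0
            rw [abs_of_nonpos (by linarith [hr.2])]
            linarith [hr.1]
    have : (1/h) * (∫ r in (T - h)..T, W r) - W T = (1/h) * ((∫ r in (T - h)..T, W r) - h * W T) := by
      field_simp
    rw [this, e, Real.norm_eq_abs, abs_mul, abs_of_nonneg (by positivity : (0:ℝ) ≤ 1/h)]
    have : |T - (T - h)| = h := by rw [abs_of_nonneg (by linarith)]; ring
    rw [this] at nb
    rw [Real.norm_eq_abs] at nb
    calc (1/h) * |∫ r in (T - h)..T, (W r - W T)| ≤ (1/h) * ((M * h) * h) :=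
        mul_le_mul_of_nonneg_left nb (by positivity)
      _ = M * h := by field_simp
  have avg_right : Tendsto (fun k => (1/u k) * ∫ r in (1:ℝ)..(1 + u k), W r) atTop (𝓝 (W 1)) := by
    rw [← tendsto_sub_nhds_zero_iff]
    refine squeeze_zero_norm (fun k => ?_) (by simpa using hu0.const_mul M)
    set h := u k with hh
    have hh0 : 0 < h := hu_pos k
    have e : (∫ r in (1:ℝ)..(1 + h), W r) - h * W 1 = ∫ r in (1:ℝ)..(1 + h), (W r - W 1) := by
      rw [intervalIntegral.integral_sub (hWint _ _) intervalIntegrable_const,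
        intervalIntegral.integral_const, smul_eq_mul]
      ring_nf
    have nb : ‖∫ r in (1:ℝ)..(1 + h), (W r - W 1)‖ ≤ (M * h) * |(1 + h) - 1| := by
      refine intervalIntegral.norm_integral_le_of_norm_le_const fun r hr => ?_
      rw [Set.uIoc_of_le (by linarith)] at hr
      rw [Real.norm_eq_abs]
      calc |W r - W 1| ≤ M * |r - 1| := hWlip 1 r
        _ ≤ M * h := by
            refine mul_le_mul_of_nonneg_left ?_ hM0
            rw [abs_of_nonneg (by linarith [hr.1])]
            linarith [hr.2]
    have : (1/h) * (∫ r in (1:ℝ)..(1 + h), W r) - W 1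
        = (1/h) * ((∫ r in (1:ℝ)..(1 + h), W r) - h * W 1) := by field_simp
    rw [this, e, Real.norm_eq_abs, abs_mul, abs_of_nonneg (by positivity : (0:ℝ) ≤ 1/h)]
    have habs : |(1 + h) - 1| = h := by rw [show (1 + h) - 1 = h by ring, abs_of_nonneg hh0.le]
    rw [habs, Real.norm_eq_abs] at nb
    calc (1/h) * |∫ r in (1:ℝ)..(1 + h), (W r - W 1)| ≤ (1/h) * ((M * h) * h) :=
        mul_le_mul_of_nonneg_left nb (by positivity)
      _ = M * h := by field_simp
  -- the dominated convergence setup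
  set μT := volume.restrict (Set.Ioc (1:ℝ) T) with hmuT
  set G : ℕ → ℝ → ℝ :=
    fun k => Set.indicator (Set.Ioc (1 + u k) T) (fun r => (1/u k) * Ψ (u k) r) with hGdef
  have hGeq : ∀ k, (∫ r, G k r ∂μT) = (1/u k) * ∫ r in (1 + u k)..T, Ψ (u k) r := by
    intro k
    rw [hGdef]
    simp only
    rw [MeasureTheory.integral_indicator measurableSet_Ioc, hmuT,
      Measure.restrict_restrict measurableSet_Ioc]
    have hint : Set.Ioc (1 + u k) T ∩ Set.Ioc (1:ℝ) T = Set.Ioc (1 + u k) T :=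
      Set.inter_eq_left.2 (Set.Ioc_subset_Ioc_left (by linarith [hu_pos k]))
    rw [hint, ← intervalIntegral.integral_of_le (by linarith [hu_le k] : 1 + u k ≤ T),
      intervalIntegral.integral_const_mul]
  have hae : ∀ᵐ r ∂(volume : Measure ℝ), ∀ i : Fin (n+1), ∀ (v : ℕ → ℝ),
      Tendsto v atTop (𝓝[>] 0) →
      Tendsto (fun k => (1/(v k)) * ∫ s in Set.Ioc (r - v k) r, f s i) atTop (𝓝 (f r i)) := by
    rw [MeasureTheory.ae_all_iff]
    exact fun i => ae_onesided (hfl i)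
  have hlim : ∀ᵐ r ∂μT, Tendsto (fun k => G k r) atTop (𝓝 (pay r)) := by
    rw [hmuT]
    filter_upwards [ae_restrict_of_ae hae, ae_restrict_mem measurableSet_Ioc] with r hrL hrmem
    have hr1 : 1 < r := hrmem.1
    have hrT : r ≤ T := hrmem.2
    have hev : ∀ᶠ k in atTop, 1 + u k < r := by
      have h1 : ∀ᶠ k in atTop, u k < r - 1 := hu0.eventually_lt_const (by linarith)
      exact h1.mono fun k hk => by linarith
    have heq : ∀ᶠ k in atTop,
        (∑ i, x r i * ((1/u k) * ∫ s in Set.Ioc (r - u k) r, f s i)) = G k r := by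
      filter_upwards [hev] with k hk
      rw [hGdef]
      simp only
      rw [Set.indicator_of_mem (Set.mem_Ioc.2 ⟨hk, hrT⟩), hΨdef]
      simp only
      rw [Finset.mul_sum]
      refine Finset.sum_congr rfl fun i _ => ?_
      rw [hgsub i (r - u k) r, intervalIntegral.integral_of_le (by linarith [hu_pos k])]
      ring
    have base : Tendsto (fun k => ∑ i, x r i * ((1/u k) * ∫ s in Set.Ioc (r - u k) r, f s i))
        atTop (𝓝 (∑ i, x r i * f r i)) :=
      tendsto_finset_sum _ fun i _ => ((hrL i u huW).const_mul (x r i))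
    exact base.congr' heq
  have hmeasG : ∀ k, AEStronglyMeasurable (G k) μT := fun k =>
    (((hΨm (u k)).const_mul _).indicator measurableSet_Ioc).aestronglyMeasurable
  have hbdG : ∀ k, ∀ᵐ r ∂μT, ‖G k r‖ ≤ M := by
    intro k
    refine ae_of_all _ fun r => ?_
    rw [hGdef]
    simp only
    rw [Real.norm_eq_abs]
    by_cases hmem : r ∈ Set.Ioc (1 + u k) T
    · rw [Set.indicator_of_mem hmem, abs_mul,
        abs_of_nonneg (le_of_lt (one_div_pos.2 (hu_pos k)))]
      calc (1/u k) * |Ψ (u k) r| ≤ (1/u k) * (M * u k) :=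
          mul_le_mul_of_nonneg_left (hΨbd (u k) r (hu_pos k).le)
            (le_of_lt (one_div_pos.2 (hu_pos k)))
        _ = M := by
          have hne : u k ≠ 0 := (hu_pos k).ne'
          field_simp
    · rw [Set.indicator_of_notMem hmem]
      simpa using hM0
  have hboundint : Integrable (fun _ : ℝ => M) μT := by
    rw [hmuT]
    exact integrableOn_const measure_Ioc_lt_top.ne
  have RHSlim : Tendsto (fun k => ∫ r, G k r ∂μT) atTop (𝓝 (∫ r, pay r ∂μT)) :=
    tendsto_integral_of_dominated_convergence _ hmeasG hboundint hbdG hlim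
  have ineq : ∀ k, (1/u k) * ((∫ r in (T - u k)..T, W r) - ∫ r in (1:ℝ)..(1 + u k), W r)
      ≤ ∫ r, G k r ∂μT := by
    intro k
    rw [hGeq k]
    exact mul_le_mul_of_nonneg_left (step2 (u k) (hu_pos k) (hu_le k))
      (le_of_lt (one_div_pos.2 (hu_pos k)))
  have Ltend : Tendsto
      (fun k => (1/u k) * ((∫ r in (T - u k)..T, W r) - ∫ r in (1:ℝ)..(1 + u k), W r))
      atTop (𝓝 (W T - W 1)) := by
    have h := avg_left.sub avg_right
    refine h.congr fun k => ?_
    ring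
  have final : W T - W 1 ≤ ∫ r, pay r ∂μT := le_of_tendsto_of_tendsto' Ltend RHSlim ineq
  have hconv : (∫ r, pay r ∂μT) = ∫ r in (1:ℝ)..T, pay r := by
    rw [intervalIntegral.integral_of_le hT.le, hmuT]
  show W T - W 1 ≤ ∫ r in (1:ℝ)..T, pay r
  rw [← hconv]
  exact final


lemma key_liminf {n : ℕ} (A : Matrix (Fin (n+1)) (Fin (n+1)) ℝ) (c : ℝ)
    (hc : ∀ q' ∈ stdSimplex ℝ (Fin (n+1)), c ≤ Abar A q')
    (x y : ℝ → Fin (n+1) → ℝ) (hxmeas : Measurable x) (hymeas : Measurable y)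
    (hx : ∀ t, x t ∈ stdSimplex ℝ (Fin (n+1))) (hy : ∀ t, y t ∈ stdSimplex ℝ (Fin (n+1)))
    (q : ℝ → Fin (n+1) → ℝ)
    (hq : ∀ t > (0:ℝ), q t = (1/t) • ∫ s in (0:ℝ)..t, y s)
    (hBR : ∀ t ≥ (1:ℝ), ∀ p' ∈ stdSimplex ℝ (Fin (n+1)),
      pay A p' (q t) ≤ pay A (x t) (q t)) :
    c ≤ atTop.liminf (fun T : ℝ => (1 / T) * ∫ t in (0:ℝ)..T, pay A (x t) (y t)) := by
  classical
  -- bound on the matrix entries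
  set M : ℝ := Finset.univ.sup' Finset.univ_nonempty
    (fun i => Finset.univ.sup' Finset.univ_nonempty (fun j => |A i j|)) with hMdef
  have hMij : ∀ i j, |A i j| ≤ M := by
    intro i j
    exact (Finset.le_sup' (fun j => |A i j|) (Finset.mem_univ j)).trans
      (Finset.le_sup' (fun i => Finset.univ.sup' Finset.univ_nonempty (fun j => |A i j|))
        (Finset.mem_univ i))
  have hynn : ∀ t j, 0 ≤ y t j := fun t => (hy t).1
  have hysum : ∀ t, ∑ j, y t j = 1 := fun t => (hy t).2
  have hxnn : ∀ t i, 0 ≤ x t i := fun t => (hx t).1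
  have hxsum : ∀ t, ∑ i, x t i = 1 := fun t => (hx t).2
  set f : ℝ → Fin (n+1) → ℝ := fun t i => ∑ j, A i j * y t j with hfdef
  have hfb : ∀ t i, |f t i| ≤ M := by
    intro t i
    calc |∑ j, A i j * y t j| ≤ ∑ j, |A i j * y t j| := Finset.abs_sum_le_sum_abs _ _
      _ ≤ ∑ j, M * y t j := by
          refine Finset.sum_le_sum fun j _ => ?_
          rw [abs_mul, abs_of_nonneg (hynn t j)]
          exact mul_le_mul_of_nonneg_right (hMij i j) (hynn t j)
      _ = M := by rw [← Finset.mul_sum, hysum, mul_one]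
  have hM0 : 0 ≤ M := (abs_nonneg _).trans (hfb 0 0)
  have hfm : ∀ i, Measurable (fun t => f t i) := by
    intro i
    exact Finset.measurable_sum _ fun j _ =>
      ((measurable_pi_apply j).comp hymeas).const_mul (A i j)
  have hfl : ∀ i, LocallyIntegrable (fun t => f t i) volume :=
    fun i => bdd_locallyIntegrable (hfm i) (fun t => hfb t i)
  have hfi : ∀ (i) (a b : ℝ), IntervalIntegrable (fun t => f t i) volume a b :=
    fun i a b => bdd_intervalIntegrable (hfm i) (fun t => hfb t i) a b
  have hyb : ∀ j t, |y t j| ≤ 1 := by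
    intro j t
    rw [abs_of_nonneg (hynn t j)]
    rw [← hysum t]
    exact Finset.single_le_sum (fun j _ => hynn t j) (Finset.mem_univ j)
  have hyint : ∀ (j) (a b : ℝ), IntervalIntegrable (fun s => y s j) volume a b :=
    fun j a b => bdd_intervalIntegrable ((measurable_pi_apply j).comp hymeas) (hyb j) a b
  have hyvint : ∀ a b : ℝ, IntervalIntegrable y volume a b := by
    intro a b
    refine IntervalIntegrable.mono_fun' (g := fun _ => 1) intervalIntegrable_const
      hymeas.aestronglyMeasurable (ae_of_all _ fun t => ?_)
    show ‖y t‖ ≤ 1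
    exact (pi_norm_le_iff_of_nonneg zero_le_one).2 fun j => by
      simpa [Real.norm_eq_abs] using hyb j t
  -- coordinates of the average
  have hqcoord : ∀ t, 0 < t → ∀ j, q t j = (1/t) * ∫ s in (0:ℝ)..t, y s j := by
    intro t ht j
    rw [hq t ht]
    have : (∫ s in (0:ℝ)..t, y s) j = ∫ s in (0:ℝ)..t, y s j := by
      have := (ContinuousLinearMap.proj (R := ℝ) (φ := fun _ : Fin (n+1) => ℝ)
        j).intervalIntegral_comp_comm (hyvint 0 t)
      simpa using this.symm
    rw [Pi.smul_apply, this, smul_eq_mul]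
  -- primitive
  set g : Fin (n+1) → ℝ → ℝ := fun i t => ∫ s in (0:ℝ)..t, f s i with hgdef
  have hg_eq : ∀ i t, g i t = ∑ j, A i j * ∫ s in (0:ℝ)..t, y s j := by
    intro i t
    rw [hgdef]
    simp only
    rw [show (fun s => f s i) = fun s => ∑ j, A i j * y s j from rfl]
    rw [intervalIntegral.integral_finset_sum (fun j _ => (hyint j 0 t).const_mul (A i j))]
    exact Finset.sum_congr rfl fun j _ => intervalIntegral.integral_const_mul _ _
  have hAq : ∀ t, 0 < t → ∀ i, (∑ j, A i j * q t j) = (1/t) * g i t := by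
    intro t ht i
    rw [hg_eq, Finset.mul_sum]
    refine Finset.sum_congr rfl fun j _ => ?_
    rw [hqcoord t ht j]
    ring
  have hpay_eq : ∀ t, 0 < t → ∀ p' : Fin (n+1) → ℝ,
      pay A p' (q t) = (1/t) * ∑ i, p' i * g i t := by
    intro t ht p'
    rw [pay, Finset.mul_sum]
    refine Finset.sum_congr rfl fun i _ => ?_
    have : ∑ j, p' i * A i j * q t j = p' i * ∑ j, A i j * q t j := by
      rw [Finset.mul_sum]
      exact Finset.sum_congr rfl fun j _ => by ring
    rw [this, hAq t ht i]
    ring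
  -- the best-reply inequality in integral form
  have hmax : ∀ t, 1 ≤ t → ∀ i,
      (∫ s in (0:ℝ)..t, f s i) ≤ ∑ j, x t j * (∫ s in (0:ℝ)..t, f s j) := by
    intro t ht i
    have ht0 : (0:ℝ) < t := lt_of_lt_of_le one_pos ht
    have h1 := hBR t ht (Pi.single i 1) (single_mem_stdSimplex ℝ i)
    rw [hpay_eq t ht0, hpay_eq t ht0] at h1
    have hsingle : ∑ i', Pi.single (M := fun _ => ℝ) i 1 i' * g i' t = g i t := by
      simp [Pi.single_apply]
    rw [hsingle] at h1
    have := (mul_le_mul_iff_right₀ (by positivity : (0:ℝ) < 1/t)).1 h1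
    exact this
  -- conclusion of the hard work
  have main := fun (T : ℝ) (hT : 1 < T) =>
    ftc_ineq f x M hfm hfb hfl hxmeas hx hmax T hT
  set W : ℝ → ℝ :=
    fun t => Finset.univ.sup' Finset.univ_nonempty (fun i => ∫ s in (0:ℝ)..t, f s i) with hWdef
  -- q T lies in the simplex
  have hqmem : ∀ T, 0 < T → q T ∈ stdSimplex ℝ (Fin (n+1)) := by
    intro T hT
    constructor
    · intro j
      rw [hqcoord T hT j]
      have : 0 ≤ ∫ s in (0:ℝ)..T, y s j :=
        intervalIntegral.integral_nonneg hT.le (fun s _ => hynn s j)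
      positivity
    · have : ∑ j, q T j = (1/T) * ∑ j, ∫ s in (0:ℝ)..T, y s j := by
        rw [Finset.mul_sum]
        exact Finset.sum_congr rfl fun j _ => hqcoord T hT j
      have h2 : ∑ j, ∫ s in (0:ℝ)..T, y s j = T := by
        rw [← intervalIntegral.integral_finset_sum (fun j _ => hyint j 0 T)]
        simp [hysum]
      rw [this, h2]
      field_simp
  -- c is below the running maximum
  have hcW : ∀ T, 1 ≤ T → c ≤ (1/T) * W T := by
    intro T hT
    have hT0 : (0:ℝ) < T := lt_of_lt_of_le one_pos hT
    have h1 : c ≤ Abar A (q T) := hc (q T) (hqmem T hT0)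
    have h2 : Abar A (q T) = (1/T) * W T := by
      rw [Abar]
      have hcongr : (fun i => ∑ j, A i j * q T j) = fun i => (1/T) * g i T :=
        funext fun i => hAq T hT0 i
      rw [hcongr]
      refine le_antisymm (Finset.sup'_le _ _ fun i _ => ?_) ?_
      · refine mul_le_mul_of_nonneg_left ?_ (by positivity)
        exact Finset.le_sup' (fun i => ∫ s in (0:ℝ)..T, f s i) (Finset.mem_univ i)
      · obtain ⟨i₀, -, hi₀⟩ := Finset.exists_mem_eq_sup' Finset.univ_nonempty
          (fun i => ∫ s in (0:ℝ)..T, f s i)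
        rw [hWdef]
        simp only
        rw [hi₀]
        exact Finset.le_sup' (fun i => (1/T) * g i T) (Finset.mem_univ i₀)
    rw [← h2]
    exact h1
  -- the integrand
  set pp : ℝ → ℝ := fun t => ∑ i, x t i * f t i with hppdef
  have hpp : ∀ t, pay A (x t) (y t) = pp t := by
    intro t
    rw [pay, hppdef]
    refine Finset.sum_congr rfl fun i _ => ?_
    rw [Finset.mul_sum]
    exact Finset.sum_congr rfl fun j _ => by ring
  have hppm : Measurable pp :=
    Finset.measurable_sum _ fun i _ => ((measurable_pi_apply i).comp hxmeas).mul (hfm i)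
  have hppb : ∀ t, |pp t| ≤ M := by
    intro t
    calc |∑ i, x t i * f t i| ≤ ∑ i, |x t i * f t i| := Finset.abs_sum_le_sum_abs _ _
      _ ≤ ∑ i, x t i * M := by
          refine Finset.sum_le_sum fun i _ => ?_
          rw [abs_mul, abs_of_nonneg (hxnn t i)]
          exact mul_le_mul_of_nonneg_left (hfb t i) (hxnn t i)
      _ = M := by rw [← Finset.sum_mul, hxsum, one_mul]
  have hppint : ∀ a b : ℝ, IntervalIntegrable pp volume a b :=
    fun a b => bdd_intervalIntegrable hppm hppb a b
  set F : ℝ → ℝ := fun T => (1 / T) * ∫ t in (0:ℝ)..T, pay A (x t) (y t) with hFdef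
  have hFpp : ∀ T, F T = (1/T) * ∫ t in (0:ℝ)..T, pp t := by
    intro T
    rw [hFdef]
    simp only
    congr 1
    exact intervalIntegral.integral_congr fun t _ => hpp t
  -- eventual lower bound for F
  have hFlow : ∀ T, 1 < T → c - (M + W 1) / T ≤ F T := by
    intro T hT
    have hT0 : (0:ℝ) < T := lt_trans one_pos hT
    have hsplit : (∫ t in (0:ℝ)..T, pp t)
        = (∫ t in (0:ℝ)..1, pp t) + ∫ t in (1:ℝ)..T, pp t :=
      (intervalIntegral.integral_add_adjacent_intervals (hppint 0 1) (hppint 1 T)).symm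
    have h01 : -M ≤ ∫ t in (0:ℝ)..1, pp t := by
      have hb : ‖∫ t in (0:ℝ)..1, pp t‖ ≤ M * |(1:ℝ) - 0| :=
        intervalIntegral.norm_integral_le_of_norm_le_const fun t _ => by
          rw [Real.norm_eq_abs]; exact hppb t
      rw [Real.norm_eq_abs] at hb
      simp only [sub_zero, abs_one, mul_one] at hb
      linarith [(abs_le.1 hb).1]
    have h1T : W T - W 1 ≤ ∫ t in (1:ℝ)..T, pp t := main T hT
    have hWT : c * T ≤ W T := by
      have h := mul_le_mul_of_nonneg_right (hcW T hT.le) hT0.le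
      calc c * T ≤ (1/T * W T) * T := h
        _ = W T := by field_simp
    rw [hFpp, hsplit]
    have hT0' : (0:ℝ) < 1/T := one_div_pos.2 hT0
    have key : c * T - (M + W 1) ≤ (∫ t in (0:ℝ)..1, pp t) + ∫ t in (1:ℝ)..T, pp t := by
      linarith
    calc c - (M + W 1)/T = (1/T) * (c*T - (M + W 1)) := by field_simp
      _ ≤ (1/T) * ((∫ t in (0:ℝ)..1, pp t) + ∫ t in (1:ℝ)..T, pp t) :=
          mul_le_mul_of_nonneg_left key hT0'.le
  -- liminf conclusion
  have hFabs : ∀ T : ℝ, 1 ≤ T → |F T| ≤ M := by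
    intro T hT
    have hT0 : (0:ℝ) < T := lt_of_lt_of_le one_pos hT
    rw [hFpp T]
    have hb : ‖∫ t in (0:ℝ)..T, pp t‖ ≤ M * |T - 0| :=
      intervalIntegral.norm_integral_le_of_norm_le_const fun t _ => by
        rw [Real.norm_eq_abs]; exact hppb t
    rw [Real.norm_eq_abs, sub_zero, abs_of_pos hT0] at hb
    rw [abs_mul, abs_of_pos (one_div_pos.2 hT0)]
    calc (1/T) * |∫ t in (0:ℝ)..T, pp t| ≤ (1/T) * (M * T) :=
        mul_le_mul_of_nonneg_left hb (le_of_lt (one_div_pos.2 hT0))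
      _ = M := by field_simp
  have hbddF : IsBoundedUnder (· ≤ ·) atTop F := by
    refine ⟨M, ?_⟩
    rw [eventually_map]
    filter_upwards [eventually_ge_atTop (1:ℝ)] with T hT
    exact (abs_le.1 (hFabs T hT)).2
  set Gfn : ℝ → ℝ := fun T => c - (M + W 1)/T with hGfn
  have hGt : Tendsto Gfn atTop (𝓝 c) := by
    have h1 : Tendsto (fun T : ℝ => (M + W 1)/T) atTop (𝓝 0) :=
      Tendsto.div_atTop (a := M + W 1) tendsto_const_nhds tendsto_id
    have h2 := (tendsto_const_nhds (x := c) (f := atTop (α := ℝ))).sub h1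
    simpa using h2
  have hGliminf : atTop.liminf Gfn = c := hGt.liminf_eq
  have hbddG : IsBoundedUnder (· ≥ ·) atTop Gfn := hGt.isBoundedUnder_ge
  have hcobF : IsCoboundedUnder (· ≥ ·) atTop F := hbddF.isCoboundedUnder_ge
  have hle : ∀ᶠ T in atTop, Gfn T ≤ F T := by
    filter_upwards [eventually_gt_atTop (1:ℝ)] with T hT
    exact hFlow T hT
  have hfin := liminf_le_liminf hle hbddG hcobF
  rw [hGliminf] at hfin
  exact hfin

lemma comb_le_sup' {n : ℕ} {w : Fin (n+1) → ℝ} (hw : w ∈ stdSimplex ℝ (Fin (n+1)))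
    (v : Fin (n+1) → ℝ) :
    ∑ i, w i * v i ≤ Finset.univ.sup' Finset.univ_nonempty v := by
  calc ∑ i, w i * v i ≤ ∑ i, w i * Finset.univ.sup' Finset.univ_nonempty v :=
      Finset.sum_le_sum fun i _ =>
        mul_le_mul_of_nonneg_left (Finset.le_sup' v (Finset.mem_univ i)) (hw.1 i)
    _ = _ := by rw [← Finset.sum_mul, hw.2, one_mul]

lemma pay_transpose {n : ℕ} (B : Matrix (Fin (n+1)) (Fin (n+1)) ℝ) (u v : Fin (n+1) → ℝ) :
    pay B.transpose u v = pay B v u := by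
  rw [pay, pay, Finset.sum_comm]
  refine Finset.sum_congr rfl fun i _ => Finset.sum_congr rfl fun j _ => ?_
  rw [Matrix.transpose_apply]
  ring

lemma Abar_transpose {n : ℕ} (B : Matrix (Fin (n+1)) (Fin (n+1)) ℝ) (p : Fin (n+1) → ℝ) :
    Abar B.transpose p = Bbar B p := by
  have h : (fun j => ∑ i, B.transpose j i * p i) = fun j => ∑ i, p i * B i j := by
    funext j
    exact Finset.sum_congr rfl fun i _ => by rw [Matrix.transpose_apply]; ring
  rw [Abar, Bbar, h]

/-- if the unique completely mixed Nash equilibrium satisfies the minmax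
property, then asymptotically the average payoff along any fictitious play orbit is at least
the Nash equilibrium payoff, for both players. -/
theorem fp_average_payoff_ge_nash {n : ℕ}
    (A B : Matrix (Fin (n + 1)) (Fin (n + 1)) ℝ)
    (EA EB : Fin (n + 1) → ℝ)
    (hNash : IsNash A B EA EB)
    (hMixed : (∀ i, 0 < EA i) ∧ (∀ j, 0 < EB j))
    (hUnique : ∀ p q, IsNash A B p q → p = EA ∧ q = EB)
    (hMinA : ∀ q ∈ stdSimplex ℝ (Fin (n + 1)), Abar A EB ≤ Abar A q)
    (hMinB : ∀ p ∈ stdSimplex ℝ (Fin (n + 1)), Bbar B EA ≤ Bbar B p)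
    (x y : ℝ → Fin (n + 1) → ℝ)
    (hxmeas : Measurable x) (hymeas : Measurable y)
    (hx : ∀ t, x t ∈ stdSimplex ℝ (Fin (n + 1)))
    (hy : ∀ t, y t ∈ stdSimplex ℝ (Fin (n + 1)))
    (p q : ℝ → Fin (n + 1) → ℝ)
    (hp : ∀ t > (0:ℝ), p t = (1 / t) • ∫ s in (0:ℝ)..t, x s)
    (hq : ∀ t > (0:ℝ), q t = (1 / t) • ∫ s in (0:ℝ)..t, y s)
    (hBRA : ∀ t ≥ (1:ℝ), ∀ p' ∈ stdSimplex ℝ (Fin (n + 1)),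
      pay A p' (q t) ≤ pay A (x t) (q t))
    (hBRB : ∀ t ≥ (1:ℝ), ∀ q' ∈ stdSimplex ℝ (Fin (n + 1)),
      pay B (p t) q' ≤ pay B (p t) (y t)) :
    pay A EA EB ≤
      atTop.liminf (fun T : ℝ => (1 / T) * ∫ t in (0:ℝ)..T, pay A (x t) (y t)) ∧
    pay B EA EB ≤
      atTop.liminf (fun T : ℝ => (1 / T) * ∫ t in (0:ℝ)..T, pay B (x t) (y t)) := by
  obtain ⟨hEA, hEB, hNA, hNB⟩ := hNash
  constructor
  · -- player A
    have hcA : ∀ q' ∈ stdSimplex ℝ (Fin (n+1)), pay A EA EB ≤ Abar A q' := by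
      intro q' hq'
      have h0 : pay A EA EB = ∑ i, EA i * ∑ j, A i j * EB j := by
        rw [pay]
        exact Finset.sum_congr rfl fun i _ => by
          rw [Finset.mul_sum]
          exact Finset.sum_congr rfl fun j _ => by ring
      have h1 : pay A EA EB ≤ Abar A EB := by
        rw [h0, Abar]
        exact comb_le_sup' hEA _
      exact h1.trans (hMinA q' hq')
    exact key_liminf A (pay A EA EB) hcA x y hxmeas hymeas hx hy q hq hBRA
  · -- player B, via the transposed game
    have hcB : ∀ p' ∈ stdSimplex ℝ (Fin (n+1)), pay B EA EB ≤ Abar B.transpose p' := by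
      intro p' hp'
      rw [Abar_transpose]
      have h0 : pay B EA EB = ∑ j, EB j * ∑ i, EA i * B i j := by
        rw [pay, Finset.sum_comm]
        exact Finset.sum_congr rfl fun j _ => by
          rw [Finset.mul_sum]
          exact Finset.sum_congr rfl fun i _ => by ring
      have h1 : pay B EA EB ≤ Bbar B EA := by
        rw [h0, Bbar]
        exact comb_le_sup' hEB _
      exact h1.trans (hMinB p' hp')
    have hbrB : ∀ t ≥ (1:ℝ), ∀ q'' ∈ stdSimplex ℝ (Fin (n+1)),
        pay B.transpose q'' (p t) ≤ pay B.transpose (y t) (p t) := by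
      intro t ht q'' hq''
      rw [pay_transpose, pay_transpose]
      exact hBRB t ht q'' hq''
    have key := key_liminf B.transpose (pay B EA EB) hcB y x hymeas hxmeas hy hx p hp hbrB
    have hconv : (fun T : ℝ => (1 / T) * ∫ t in (0:ℝ)..T, pay B.transpose (y t) (x t))
        = fun T : ℝ => (1 / T) * ∫ t in (0:ℝ)..T, pay B (x t) (y t) := by
      funext T
      congr 1
      exact intervalIntegral.integral_congr fun t _ => pay_transpose B (y t) (x t)
    rwa [hconv] at key
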